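/- Let G be an r-regular non-complete connected graph on p vertices with adjacency eigenvalues r, λ₂, ..., λ_p. Then the eccentricity spectrum of G ∨ G consists of 2(p−r−1) with multiplicity 2 and −2(λ_i + 1) with multiplicity 2 for each i = 2, ..., p. -/

import Mathlib

open SimpleGraph Matrix Finset

attribute [local instance] Fintype.ofFinite Classical.propDecidable

noncomputable section

/-- Eccentricity of a vertex: maximum distance to any vertex. -/
def ecc {V : Type*} [Fintype V] (G : SimpleGraph V) (v : V) : ℕ :=
  Finset.univ.sup (fun w => G.dist v w)

/-- Diameter: maximum eccentricity. -/
def gdiam {V : Type*} [Fintype V] (G : SimpleGraph V) : ℕ :=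
  Finset.univ.sup (fun v => ecc G v)

/-- The eccentricity matrix. -/
def eccMatrix {V : Type*} [Fintype V] (G : SimpleGraph V) : Matrix V V ℝ :=
  fun u v => if G.dist u v = min (ecc G u) (ecc G v) then (G.dist u v : ℝ) else 0

/-- Join of two graphs. -/
def joinGraph {V₁ V₂ : Type*} (G₁ : SimpleGraph V₁) (G₂ : SimpleGraph V₂) :
    SimpleGraph (V₁ ⊕ V₂) :=
  SimpleGraph.fromRel (fun x y =>
    match x, y with
    | Sum.inl a, Sum.inl b => G₁.Adj a b
    | Sum.inr a, Sum.inr b => G₂.Adj a b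
    | Sum.inl _, Sum.inr _ => True
    | Sum.inr _, Sum.inl _ => False)

/-- Disjoint union of two graphs. -/
def disjUnion {V₁ V₂ : Type*} (G₁ : SimpleGraph V₁) (G₂ : SimpleGraph V₂) :
    SimpleGraph (V₁ ⊕ V₂) :=
  SimpleGraph.fromRel (fun x y =>
    match x, y with
    | Sum.inl a, Sum.inl b => G₁.Adj a b
    | Sum.inr a, Sum.inr b => G₂.Adj a b
    | _, _ => False)

/-- Subdivision-vertex join `G₁ ∨̇ G₂`: take the subdivision of `G₁` (original vertices
`V₁`, one new vertex for every edge) and join every original vertex of `G₁` to every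
vertex of `G₂`. -/
def subVertexJoin {V₁ V₂ : Type*} (G₁ : SimpleGraph V₁) (G₂ : SimpleGraph V₂) :
    SimpleGraph ((V₁ ⊕ G₁.edgeSet) ⊕ V₂) :=
  SimpleGraph.fromRel (fun x y =>
    match x, y with
    | Sum.inl (Sum.inl v), Sum.inl (Sum.inr e) => v ∈ (e : Sym2 V₁)
    | Sum.inl (Sum.inl _), Sum.inr _ => True
    | Sum.inr a, Sum.inr b => G₂.Adj a b
    | _, _ => False)

/-- Subdivision-edge join `G₁ ⊻ G₂`: take the subdivision of `G₁` and join every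
subdivision (inserted) vertex of `G₁` to every vertex of `G₂`. -/
def subEdgeJoin {V₁ V₂ : Type*} (G₁ : SimpleGraph V₁) (G₂ : SimpleGraph V₂) :
    SimpleGraph ((V₁ ⊕ G₁.edgeSet) ⊕ V₂) :=
  SimpleGraph.fromRel (fun x y =>
    match x, y with
    | Sum.inl (Sum.inl v), Sum.inl (Sum.inr e) => v ∈ (e : Sym2 V₁)
    | Sum.inl (Sum.inr _), Sum.inr _ => True
    | Sum.inr a, Sum.inr b => G₂.Adj a b
    | _, _ => False)

/-- Line graph: vertices are edges of `G`, adjacent iff they share an endpoint. -/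
def lineG {V : Type*} (G : SimpleGraph V) : SimpleGraph G.edgeSet :=
  SimpleGraph.fromRel (fun e f => ∃ v, v ∈ (e : Sym2 V) ∧ v ∈ (f : Sym2 V))

/-- Incidence matrix of a graph. -/
def incMat {V : Type*} [Fintype V] (G : SimpleGraph V) : Matrix V G.edgeSet ℝ :=
  fun v e => if v ∈ (e : Sym2 V) then 1 else 0

/-- All-ones matrix. -/
def Jmat (m n : Type*) : Matrix m n ℝ := Matrix.of (fun _ _ => (1 : ℝ))

/-- A symmetric matrix is irreducible iff it is not permutation-similar to a
nontrivial block upper-triangular matrix, i.e. there is no nontrivial vertex split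
with all cross entries zero. -/
def MatIrreducible {n : Type*} (M : Matrix n n ℝ) : Prop :=
  ∀ S : Set n, S.Nonempty → Sᶜ.Nonempty → ∃ u ∈ S, ∃ v ∈ Sᶜ, M u v ≠ 0

/-- `μ` is an eigenvalue of `M`. -/
def IsEigenvalue {n : Type*} [Fintype n] (M : Matrix n n ℝ) (μ : ℝ) : Prop :=
  ∃ v : n → ℝ, v ≠ 0 ∧ M.mulVec v = μ • v

/-- Eigenspace of `M` for `μ`. -/
def eigSpace {n : Type*} [Fintype n] (M : Matrix n n ℝ) (μ : ℝ) :
    Submodule ℝ (n → ℝ) :=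
  LinearMap.ker (M.mulVecLin - μ • LinearMap.id)

/-- Eccentricity energy: sum of absolute values of the eccentricity eigenvalues. -/
def eccEnergy {V : Type*} [Fintype V] (G : SimpleGraph V) : ℝ :=
  ((eccMatrix G).charpoly.roots.map (fun x => |x|)).sum

/-- Eccentricity Wiener index: half the sum of the entries of the eccentricity matrix. -/
def eccWiener {V : Type*} [Fintype V] (G : SimpleGraph V) : ℝ :=
  (∑ u, ∑ v, eccMatrix G u v) / 2

end


section Aux
open Polynomial
variable {n : Type*} [Fintype n] [DecidableEq n]

variable {n : Type*} [Fintype n] [DecidableEq n]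

lemma charpoly_conj_one {R : Type*} [CommRing R] (U D W : Matrix n n R)
    (h1 : U * W = 1) : (U * D * W).charpoly = D.charpoly := by
  have hm : ∀ P Q : Matrix n n R, (P * Q).map (C : R →+* R[X]) =
      P.map C * Q.map C := fun P Q => Matrix.map_mul
  have hchm : charmatrix (U * D * W) = U.map C * charmatrix D * W.map C := by
    rw [charmatrix, charmatrix, RingHom.mapMatrix_apply, RingHom.mapMatrix_apply]
    rw [Matrix.mul_sub, Matrix.sub_mul, hm, hm]
    congr 1
    rw [scalar_apply, ← smul_one_eq_diagonal, Matrix.mul_smul, Matrix.smul_mul, Matrix.mul_one,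
      ← hm, h1, Matrix.map_one _ (map_zero C) (map_one C)]
  have h1' : U.map (C : R →+* R[X]) * W.map C = 1 := by
    rw [← hm, h1, Matrix.map_one _ (map_zero C) (map_one C)]
  rw [Matrix.charpoly, hchm, det_mul, det_mul, Matrix.charpoly]
  calc (U.map C).det * (charmatrix D).det * (W.map C).det
      = (charmatrix D).det * ((U.map C).det * (W.map C).det) := by ring
    _ = (charmatrix D).det := by rw [← det_mul, h1', det_one, mul_one]

lemma charpoly_diagonal {R : Type*} [CommRing R] (d : n → R) :
    (diagonal d).charpoly = ∏ i, (X - C (d i)) := by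
  have : charmatrix (diagonal d) = diagonal (fun i => X - C (d i)) := by
    ext i j
    rcases eq_or_ne i j with rfl | h
    · simp
    · simp [h, charmatrix_apply_ne, diagonal_apply_ne _ h]
  rw [Matrix.charpoly, this, det_diagonal]

open SimpleGraph in
lemma adjMatrix_isHermitian {V : Type*} [Fintype V] [DecidableEq V]
    (G : SimpleGraph V) [DecidableRel G.Adj] : (G.adjMatrix ℝ).IsHermitian := by
  have := SimpleGraph.transpose_adjMatrix G (α := ℝ)
  rw [Matrix.IsHermitian, conjTranspose, ← this]
  ext i j
  simp [Matrix.map]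

open SimpleGraph in
lemma adj_charpoly_prod {V : Type*} [Fintype V] [DecidableEq V]
    (G : SimpleGraph V) [DecidableRel G.Adj] :
    (G.adjMatrix ℝ).charpoly = ∏ i, (X - C ((adjMatrix_isHermitian G).eigenvalues i)) := by
  set hA := adjMatrix_isHermitian G
  have hU := Matrix.mem_unitaryGroup_iff.mp (hA.eigenvectorUnitary).2
  have hspec := hA.spectral_theorem
  rw [RCLike.ofReal_real_eq_id, Unitary.conjStarAlgAut_apply] at hspec
  calc (G.adjMatrix ℝ).charpoly
      = ((hA.eigenvectorUnitary : Matrix V V ℝ) * diagonal (id ∘ hA.eigenvalues) *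
          (star (hA.eigenvectorUnitary : Matrix V V ℝ))).charpoly := by rw [← hspec]
    _ = (diagonal (id ∘ hA.eigenvalues)).charpoly := charpoly_conj_one _ _ _ hU
    _ = ∏ i, (X - C (hA.eigenvalues i)) := _root_.charpoly_diagonal _

set_option maxHeartbeats 2000000 in
open SimpleGraph in
lemma charpoly_M {V : Type*} [Fintype V] [DecidableEq V] (G : SimpleGraph V)
    [DecidableRel G.Adj] (p r : ℕ) (hp : Fintype.card V = p)
    (hreg : G.IsRegularOfDegree r) (μ : Multiset ℝ)
    (hspec : (G.adjMatrix ℝ).charpoly.roots = (r : ℝ) ::ₘ μ) :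
    (Matrix.of fun u v : V => if u ≠ v ∧ ¬ G.Adj u v then (2:ℝ) else 0).charpoly
      = (X - C (2 * ((p : ℝ) - r - 1))) * (μ.map fun a => X - C (-2 * (a + 1))).prod := by
  classical
  set hA := adjMatrix_isHermitian G with hhA
  set ev := hA.eigenvalues with hev
  have hch : (G.adjMatrix ℝ).charpoly = ∏ i, (X - C (ev i)) := adj_charpoly_prod G
  have hmsroots : (Finset.univ.val.map ev) = (r : ℝ) ::ₘ μ := by
    have h1 : (∏ i, (X - C (ev i))).roots = Finset.univ.val.map ev := by
      rw [Finset.prod_eq_multiset_prod]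
      have h2 := roots_multiset_prod_X_sub_C (Finset.univ.val.map ev)
      rw [Multiset.map_map] at h2
      exact h2
    rw [← h1, ← hch, hspec]
  -- fraction field setup
  set F := FractionRing (Polynomial ℝ) with hF
  set φ : Polynomial ℝ →+* F := (algebraMap (Polynomial ℝ) F : Polynomial ℝ →+* F) with hφ
  have hinj : Function.Injective φ := IsFractionRing.injective (Polynomial ℝ) F
  apply hinj
  set ρ : ℝ →+* F := φ.comp C with hρ
  set x : F := φ X with hx
  set M : Matrix V V ℝ :=
    Matrix.of fun u v : V => if u ≠ v ∧ ¬ G.Adj u v then (2:ℝ) else 0 with hM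
  set B : Matrix V V F := (x + 2) • 1 + (2:F) • (G.adjMatrix F) with hB
  have claim1 : (charmatrix M).map φ
      = B + Matrix.replicateCol Unit (fun _ => (-2:F)) * Matrix.replicateRow Unit (fun _ => (1:F)) := by
    ext u v
    rcases eq_or_ne u v with rfl | huv
    · simp [Matrix.map_apply, hM, hB, Matrix.mul_apply, Matrix.one_apply]; rw [hx]; ring
    · by_cases hadj : G.Adj u v
      · simp [Matrix.map_apply, charmatrix_apply_ne _ _ _ huv, hM, hB, huv, hadj,
          Matrix.mul_apply, Matrix.one_apply]
      · simp [Matrix.map_apply, charmatrix_apply_ne _ _ _ huv, hM, hB, huv, hadj,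
          Matrix.mul_apply, Matrix.one_apply, map_ofNat]
  -- decomposition of B
  have hmapmul : ∀ P Q : Matrix V V ℝ, (P * Q).map ρ = P.map ρ * Q.map ρ :=
    fun P Q => Matrix.map_mul
  have hadjmap : (G.adjMatrix ℝ).map ρ = G.adjMatrix F := by
    ext u v
    simp [Matrix.map_apply, SimpleGraph.adjMatrix_apply, apply_ite ρ]
  set U : Matrix V V ℝ := (hA.eigenvectorUnitary : Matrix V V ℝ) with hUdef
  have hU : U * star U = 1 := Matrix.mem_unitaryGroup_iff.mp (hA.eigenvectorUnitary).2
  have hU' : star U * U = 1 := Matrix.mem_unitaryGroup_iff'.mp (hA.eigenvectorUnitary).2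
  have hAdec : G.adjMatrix ℝ = U * Matrix.diagonal ev * star U := by
    have := hA.spectral_theorem
    rwa [RCLike.ofReal_real_eq_id, Function.id_comp, Unitary.conjStarAlgAut_apply] at this
  have hBdec : B = (U.map ρ) * Matrix.diagonal (fun i => x + 2 + 2 * ρ (ev i))
      * ((star U).map ρ) := by
    have hdsplit : Matrix.diagonal (fun i : V => x + 2 + 2 * ρ (ev i))
        = (x + 2) • (1 : Matrix V V F) + (2:F) • Matrix.diagonal (fun i => ρ (ev i)) := by
      ext u v
      rcases eq_or_ne u v with rfl | huv
      · simp [Matrix.one_apply]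
      · simp [Matrix.diagonal_apply_ne _ huv, Matrix.one_apply_ne huv]
    rw [hdsplit, Matrix.mul_add, Matrix.add_mul, hB]
    congr 1
    · rw [Matrix.mul_smul, Matrix.smul_mul, Matrix.mul_one, ← hmapmul, hU,
        Matrix.map_one _ (map_zero ρ) (map_one ρ)]
    · rw [Matrix.mul_smul, Matrix.smul_mul, ← Matrix.diagonal_map (map_zero ρ), ← hmapmul,
        ← hmapmul, ← hAdec, hadjmap]
  have hdetU : (U.map ρ).det * ((star U).map ρ).det = 1 := by
    rw [← Matrix.det_mul, ← hmapmul, hU, Matrix.map_one _ (map_zero ρ) (map_one ρ),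
      Matrix.det_one]
  have hdetB : B.det = ∏ i, (x + 2 + 2 * ρ (ev i)) := by
    rw [hBdec, Matrix.det_mul, Matrix.det_mul, Matrix.det_diagonal]
    calc (U.map ρ).det * (∏ i, (x + 2 + 2 * ρ (ev i))) * ((star U).map ρ).det
        = (∏ i, (x + 2 + 2 * ρ (ev i))) * ((U.map ρ).det * ((star U).map ρ).det) := by ring
      _ = ∏ i, (x + 2 + 2 * ρ (ev i)) := by rw [hdetU, mul_one]
  have hgen : ∀ a : ℝ, x + 2 + 2 * ρ a ≠ 0 := by
    intro a
    have heq : x + 2 + 2 * ρ a = φ (X + C (2 + 2 * a)) := by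
      simp [hρ, map_ofNat]
      ring
    rw [heq]
    intro h0
    have := hinj (h0.trans (map_zero φ).symm)
    exact Polynomial.X_add_C_ne_zero (2 + 2*a) this
  have hrcast : ρ ((r:ℕ):ℝ) = (r : F) := by simp
  set s : F := x + 2 + 2 * (r : F) with hsdef
  have hs : s ≠ 0 := by
    rw [hsdef, ← hrcast]; exact hgen _
  have hdetB0 : B.det ≠ 0 := by
    rw [hdetB]
    exact Finset.prod_ne_zero_iff.mpr (fun i _ => hgen (ev i))
  have hdetBu : IsUnit B.det := isUnit_iff_ne_zero.mpr hdetB0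
  have hB1 : B *ᵥ (fun _ : V => (1:F)) = fun _ => s := by
    funext w
    have hadv : (G.adjMatrix F *ᵥ Function.const V (1:F)) w = (r : F) * 1 :=
      SimpleGraph.adjMatrix_mulVec_const_apply_of_regular hreg
    rw [hB, Matrix.add_mulVec, Matrix.smul_mulVec, Matrix.smul_mulVec,
      Matrix.one_mulVec]
    have : (G.adjMatrix F *ᵥ fun _ : V => (1:F)) w = (r : F) * 1 := hadv
    simp only [Pi.add_apply, Pi.smul_apply, smul_eq_mul, this]
    rw [hsdef]; ring
  have hBinv1 : B⁻¹ *ᵥ (fun _ : V => (1:F)) = fun _ => s⁻¹ := by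
    have h1 : B⁻¹ *ᵥ (B *ᵥ (fun _ : V => (1:F))) = fun _ => (1:F) := by
      rw [Matrix.mulVec_mulVec, Matrix.nonsing_inv_mul B hdetBu, Matrix.one_mulVec]
    rw [hB1] at h1
    have h2 : (fun _ : V => s) = s • (fun _ : V => (1:F)) := by funext w; simp
    rw [h2, Matrix.mulVec_smul] at h1
    funext w
    have := congrFun h1 w
    simp only [Pi.smul_apply, smul_eq_mul] at this
    exact (inv_eq_of_mul_eq_one_right this).symm
  have hrow : ∀ i, ∑ j, B⁻¹ i j = s⁻¹ := by
    intro i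
    have := congrFun hBinv1 i
    simpa [Matrix.mulVec, dotProduct] using this
  have hE : Matrix.replicateRow Unit (fun _ : V => (1:F)) * B⁻¹ * Matrix.replicateCol Unit (fun _ : V => (-2:F))
      = Matrix.of (fun _ _ : Unit => -2 * (p:F) * s⁻¹) := by
    ext a b
    simp only [Matrix.mul_apply, Matrix.replicateRow_apply, Matrix.replicateCol_apply, Matrix.of_apply, one_mul]
    rw [← Finset.sum_mul, Finset.sum_comm]
    have h1 : ∀ i ∈ Finset.univ, ∑ j, B⁻¹ i j = s⁻¹ := fun i _ => hrow i
    rw [Finset.sum_congr rfl h1, Finset.sum_const, Finset.card_univ, hp, nsmul_eq_mul]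
    ring
  have hdet1 : ((1 : Matrix Unit Unit F) + Matrix.replicateRow Unit (fun _ : V => (1:F)) * B⁻¹ *
      Matrix.replicateCol Unit (fun _ : V => (-2:F))).det = 1 + -2 * (p:F) * s⁻¹ := by
    rw [hE, Matrix.det_unique]
    simp [Matrix.one_apply]
  have hprod : ∏ i, (x + 2 + 2 * ρ (ev i))
      = s * (μ.map (fun a => x + 2 + 2 * ρ a)).prod := by
    rw [Finset.prod_eq_multiset_prod]
    have h2 : Multiset.map (fun i => x + 2 + 2 * ρ (ev i)) Finset.univ.val
        = Multiset.map (fun a => x + 2 + 2 * ρ a) (Finset.univ.val.map ev) := by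
      rw [Multiset.map_map]; rfl
    rw [h2, hmsroots, Multiset.map_cons, Multiset.prod_cons, hrcast]
  have hLHS : φ M.charpoly = (s * (μ.map (fun a => x + 2 + 2 * ρ a)).prod)
      * (1 + -2 * (p:F) * s⁻¹) := by
    rw [Matrix.charpoly, RingHom.map_det, RingHom.mapMatrix_apply, claim1,
      Matrix.det_add_replicateCol_mul_replicateRow hdetBu, hdet1, hdetB, hprod]
  rw [hLHS]
  have hRHS : φ ((X - C (2 * ((p : ℝ) - r - 1))) * (μ.map fun a => X - C (-2 * (a + 1))).prod)
      = (x - (2 * ((p:F) - r - 1))) * (μ.map (fun a => x + 2 + 2 * ρ a)).prod := by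
    rw [_root_.map_mul, map_sub, map_multiset_prod, Multiset.map_map]
    congr 1
    · simp [hρ, map_ofNat]; exact hx.symm
    · apply congrArg
      apply Multiset.map_congr rfl
      intro a _
      simp only [Function.comp_apply, map_sub, hρ]
      have : (φ.comp C) (-2 * (a + 1)) = -(2 + 2 * (φ.comp C) a) := by
        simp [map_ofNat]; ring
      rw [hx]
      simp only [RingHom.comp_apply] at this ⊢
      rw [this]
      ring
  rw [hRHS]
  have hsval : s = x + 2 + 2 * (r:F) := hsdef
  have key : s * (1 + -2 * (p:F) * s⁻¹) = x - (2 * ((p:F) - r - 1)) := by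
    rw [mul_add, mul_one, mul_comm (-2 * (p:F)) s⁻¹, ← mul_assoc, mul_inv_cancel₀ hs, one_mul,
      hsval]
    ring
  rw [← key]
  ring

open SimpleGraph

section JoinGraphDefs

variable {V : Type*} (G : SimpleGraph V)

lemma join_adj_ll {u v : V} : (joinGraph G G).Adj (Sum.inl u) (Sum.inl v) ↔ G.Adj u v := by
  rw [joinGraph, SimpleGraph.fromRel_adj]
  constructor
  · rintro ⟨h, h1 | h1⟩
    · exact h1
    · exact h1.symm
  · intro h
    exact ⟨by simpa using h.ne, Or.inl h⟩

lemma join_adj_rr {u v : V} : (joinGraph G G).Adj (Sum.inr u) (Sum.inr v) ↔ G.Adj u v := by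
  rw [joinGraph, SimpleGraph.fromRel_adj]
  constructor
  · rintro ⟨h, h1 | h1⟩
    · exact h1
    · exact h1.symm
  · intro h
    exact ⟨by simpa using h.ne, Or.inl h⟩

lemma join_adj_lr (u v : V) : (joinGraph G G).Adj (Sum.inl u) (Sum.inr v) := by
  rw [joinGraph, SimpleGraph.fromRel_adj]
  exact ⟨by simp, Or.inl trivial⟩

lemma join_adj_rl (u v : V) : (joinGraph G G).Adj (Sum.inr u) (Sum.inl v) :=
  (join_adj_lr G v u).symm

lemma join_dist_lr (u v : V) : (joinGraph G G).dist (Sum.inl u) (Sum.inr v) = 1 :=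
  SimpleGraph.dist_eq_one_iff_adj.mpr (join_adj_lr G u v)

lemma join_dist_rl (u v : V) : (joinGraph G G).dist (Sum.inr u) (Sum.inl v) = 1 :=
  SimpleGraph.dist_eq_one_iff_adj.mpr (join_adj_rl G u v)

lemma join_dist_ll {u v : V} (huv : u ≠ v) (hadj : ¬ G.Adj u v) :
    (joinGraph G G).dist (Sum.inl u) (Sum.inl v) = 2 := by
  set H := joinGraph G G with hH
  have hle : H.dist (Sum.inl u) (Sum.inl v) ≤ 2 := by
    have := SimpleGraph.dist_le
      (Walk.cons (join_adj_lr G u u) (Walk.cons (join_adj_rl G u v) Walk.nil))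
    simpa using this
  have h0 : H.dist (Sum.inl u) (Sum.inl v) ≠ 0 := by
    rw [SimpleGraph.dist_ne_zero_iff_ne_and_reachable]
    exact ⟨by simpa using huv,
      ⟨Walk.cons (join_adj_lr G u u) (Walk.cons (join_adj_rl G u v) Walk.nil)⟩⟩
  have h1 : H.dist (Sum.inl u) (Sum.inl v) ≠ 1 := by
    intro h
    exact hadj ((join_adj_ll G).mp (SimpleGraph.dist_eq_one_iff_adj.mp h))
  omega

lemma join_dist_rr {u v : V} (huv : u ≠ v) (hadj : ¬ G.Adj u v) :
    (joinGraph G G).dist (Sum.inr u) (Sum.inr v) = 2 := by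
  set H := joinGraph G G with hH
  have hle : H.dist (Sum.inr u) (Sum.inr v) ≤ 2 := by
    have := SimpleGraph.dist_le
      (Walk.cons (join_adj_rl G u u) (Walk.cons (join_adj_lr G u v) Walk.nil))
    simpa using this
  have h0 : H.dist (Sum.inr u) (Sum.inr v) ≠ 0 := by
    rw [SimpleGraph.dist_ne_zero_iff_ne_and_reachable]
    exact ⟨by simpa using huv,
      ⟨Walk.cons (join_adj_rl G u u) (Walk.cons (join_adj_lr G u v) Walk.nil)⟩⟩
  have h1 : H.dist (Sum.inr u) (Sum.inr v) ≠ 1 := by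
    intro h
    exact hadj ((join_adj_rr G).mp (SimpleGraph.dist_eq_one_iff_adj.mp h))
  omega

lemma join_dist_le (x y : V ⊕ V) [DecidableEq V] [DecidableRel G.Adj] :
    (joinGraph G G).dist x y ≤ 2 := by
  rcases x with u | u <;> rcases y with v | v
  · rcases eq_or_ne u v with rfl | huv
    · simp [SimpleGraph.dist_self]
    · by_cases hadj : G.Adj u v
      · rw [SimpleGraph.dist_eq_one_iff_adj.mpr ((join_adj_ll G).mpr hadj)]; omega
      · rw [join_dist_ll G huv hadj]
  · rw [join_dist_lr]; omega
  · rw [join_dist_rl]; omega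
  · rcases eq_or_ne u v with rfl | huv
    · simp [SimpleGraph.dist_self]
    · by_cases hadj : G.Adj u v
      · rw [SimpleGraph.dist_eq_one_iff_adj.mpr ((join_adj_rr G).mpr hadj)]; omega
      · rw [join_dist_rr G huv hadj]

lemma exists_nonadj {V : Type*} [Fintype V] [DecidableEq V] (G : SimpleGraph V) [DecidableRel G.Adj] {r : ℕ}
    (hreg : G.IsRegularOfDegree r) (hnc : G ≠ ⊤) (u : V) :
    ∃ w, w ≠ u ∧ ¬ G.Adj u w := by
  by_contra hcon
  push_neg at hcon
  apply hnc
  have hr : r = Fintype.card V - 1 := by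
    have hnb : G.neighborFinset u = Finset.univ.erase u := by
      apply Finset.Subset.antisymm
      · intro w hw
        rw [SimpleGraph.mem_neighborFinset] at hw
        exact Finset.mem_erase.mpr ⟨hw.ne', Finset.mem_univ _⟩
      · intro w hw
        rw [SimpleGraph.mem_neighborFinset]
        exact hcon w (Finset.mem_erase.mp hw).1
    have := hreg u
    rw [SimpleGraph.degree, hnb, Finset.card_erase_of_mem (Finset.mem_univ u),
      Finset.card_univ] at this
    omega
  have hv : ∀ v, G.neighborFinset v = Finset.univ.erase v := by
    intro v
    apply Finset.eq_of_subset_of_card_le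
    · intro w hw
      rw [SimpleGraph.mem_neighborFinset] at hw
      exact Finset.mem_erase.mpr ⟨hw.ne', Finset.mem_univ _⟩
    · rw [Finset.card_erase_of_mem (Finset.mem_univ v), Finset.card_univ]
      have := hreg v
      rw [SimpleGraph.degree] at this
      omega
  ext v w
  rw [SimpleGraph.top_adj]
  constructor
  · exact fun h => h.ne
  · intro h
    have : w ∈ G.neighborFinset v := by
      rw [hv v]
      exact Finset.mem_erase.mpr ⟨Ne.symm h, Finset.mem_univ _⟩
    rwa [SimpleGraph.mem_neighborFinset] at this

end JoinGraphDefs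


section EccPart
open Polynomial
variable {V : Type*} [Fintype V] [DecidableEq V] (G : SimpleGraph V) [DecidableRel G.Adj]

lemma join_ecc_eq {r : ℕ} (hreg : G.IsRegularOfDegree r) (hnc : G ≠ ⊤) (x : V ⊕ V) :
    ecc (joinGraph G G) x = 2 := by
  have hle : ecc (joinGraph G G) x ≤ 2 :=
    Finset.sup_le fun y _ => join_dist_le G x y
  have hge : 2 ≤ ecc (joinGraph G G) x := by
    rcases x with u | u
    · obtain ⟨w, hw, hnadj⟩ := exists_nonadj G hreg hnc u
      have h2 : (joinGraph G G).dist (Sum.inl u) (Sum.inl w) = 2 :=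
        join_dist_ll G hw.symm hnadj
      have := Finset.le_sup (f := fun y => (joinGraph G G).dist (Sum.inl u) y)
        (Finset.mem_univ (Sum.inl w))
      simpa only [ecc, h2] using this
    · obtain ⟨w, hw, hnadj⟩ := exists_nonadj G hreg hnc u
      have h2 : (joinGraph G G).dist (Sum.inr u) (Sum.inr w) = 2 :=
        join_dist_rr G hw.symm hnadj
      have := Finset.le_sup (f := fun y => (joinGraph G G).dist (Sum.inr u) y)
        (Finset.mem_univ (Sum.inr w))
      simpa only [ecc, h2] using this
  omega

lemma join_eccMatrix {r : ℕ} (hreg : G.IsRegularOfDegree r) (hnc : G ≠ ⊤) :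
    eccMatrix (joinGraph G G) = Matrix.fromBlocks
      (Matrix.of fun u v : V => if u ≠ v ∧ ¬ G.Adj u v then (2:ℝ) else 0) 0 0
      (Matrix.of fun u v : V => if u ≠ v ∧ ¬ G.Adj u v then (2:ℝ) else 0) := by
  have hecc := join_ecc_eq G hreg hnc
  ext x y
  rw [eccMatrix, hecc x, hecc y]
  rcases x with u | u <;> rcases y with v | v
  · rcases eq_or_ne u v with rfl | huv
    · simp [SimpleGraph.dist_self]
    · by_cases hadj : G.Adj u v
      · have h1 : (joinGraph G G).dist (Sum.inl u) (Sum.inl v) = 1 :=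
          SimpleGraph.dist_eq_one_iff_adj.mpr ((join_adj_ll G).mpr hadj)
        simp [h1, huv, hadj]
      · have h2 := join_dist_ll G huv hadj
        simp [h2, huv, hadj]
  · simp [join_dist_lr G u v]
  · simp [join_dist_rl G u v]
  · rcases eq_or_ne u v with rfl | huv
    · simp [SimpleGraph.dist_self]
    · by_cases hadj : G.Adj u v
      · have h1 : (joinGraph G G).dist (Sum.inr u) (Sum.inr v) = 1 :=
          SimpleGraph.dist_eq_one_iff_adj.mpr ((join_adj_rr G).mpr hadj)
        simp [h1, huv, hadj]
      · have h2 := join_dist_rr G huv hadj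
        simp [h2, huv, hadj]

end EccPart
end Aux

/-- For an `r`-regular non-complete connected graph `G` on `p` vertices with
adjacency spectrum `{r} ∪ μ`, the eccentricity spectrum of `G ∨ G` consists of
`2(p-r-1)` with multiplicity 2 and `-2(λ+1)` with multiplicity 2 for each `λ ∈ μ`. -/
theorem stmt1 {V : Type*} [Fintype V] (G : SimpleGraph V) (p r : ℕ)
    (hp : Fintype.card V = p) (hconn : G.Connected) (hreg : G.IsRegularOfDegree r)
    (hnc : G ≠ ⊤) (μ : Multiset ℝ)
    (hspec : (G.adjMatrix ℝ).charpoly.roots = (r : ℝ) ::ₘ μ) :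
    (eccMatrix (joinGraph G G)).charpoly.roots =
      (2 * ((p : ℝ) - r - 1)) ::ₘ (2 * ((p : ℝ) - r - 1)) ::ₘ
        (μ.map (fun x => -2 * (x + 1)) + μ.map (fun x => -2 * (x + 1))) := by
  classical
  have hM := charpoly_M G p r hp hreg μ hspec
  rw [join_eccMatrix G hreg hnc, Matrix.charpoly_fromBlocks_zero₂₁, hM]
  set P : Polynomial ℝ := (μ.map fun a => Polynomial.X - Polynomial.C (-2 * (a + 1))).prod
    with hP
  have hPfact : P = ((μ.map fun a => -2 * (a + 1)).map
      fun a => Polynomial.X - Polynomial.C a).prod := by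
    rw [Multiset.map_map]; rfl
  have hPmonic : P.Monic := by
    rw [hPfact]
    apply Polynomial.monic_multiset_prod_of_monic
    intro a _
    exact Polynomial.monic_X_sub_C a
  have hPne : P ≠ 0 := hPmonic.ne_zero
  have hXe : (Polynomial.X - Polynomial.C (2 * ((p : ℝ) - r - 1))) ≠ 0 :=
    (Polynomial.monic_X_sub_C _).ne_zero
  have hfac_ne : (Polynomial.X - Polynomial.C (2 * ((p : ℝ) - r - 1))) * P ≠ 0 :=
    mul_ne_zero hXe hPne
  have hProots : P.roots = μ.map fun a => -2 * (a + 1) := by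
    rw [hPfact]
    exact Polynomial.roots_multiset_prod_X_sub_C _
  rw [Polynomial.roots_mul (mul_ne_zero hfac_ne hfac_ne),
    Polynomial.roots_mul hfac_ne, Polynomial.roots_X_sub_C, hProots,
    Multiset.singleton_add]
  rw [Multiset.cons_add, Multiset.add_cons]
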